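/- Let λ ∈ (0, 1], p ∈ (0, 1], let ω be holomorphic on the open unit disk D with |ω(z)| ≤ 1 for all z ∈ D, let c ∈ ℂ with |c| > (1 + λ·p²)/p, and set A(z) = 1 + c·z − λ·z·∫₀ᶻ ω(t) dt (segment integral). Then, with r = (1 + λ·p²)/(p·|c|) ∈ (0, 1), the function A has a zero z₀ with |z₀| ≤ p·r. (This is the fixed-point argument at the heart of the proof of Theorem 3: a fixed point of F(z) = (1/(−c))·(1 − λ·z·∫₀ᶻ ω(t) dt), which exists by Banach's fixed point theorem, is a zero of A, i.e. a pole of f = z/A.) -/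

import Mathlib

open Complex Metric intervalIntegral

/-- Contour integral of `ω` along the straight line segment from `z₁` to `z₂`:
`∫_{z₁}^{z₂} ω(t) dt = (z₂ - z₁) ∫₀¹ ω(z₁ + s (z₂ - z₁)) ds`. -/
noncomputable def segInt (ω : ℂ → ℂ) (z₁ z₂ : ℂ) : ℂ :=
  (z₂ - z₁) * ∫ s in (0:ℝ)..(1:ℝ), ω (z₁ + (s : ℂ) * (z₂ - z₁))

lemma segInt_zero_eq (ω : ℂ → ℂ) (z : ℂ) :
    segInt ω 0 z = z * ∫ s in (0:ℝ)..1, ω ((s : ℂ) * z) := by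
  simp [segInt]

lemma hasDerivAt_segInt {ω : ℂ → ℂ} (hω : DifferentiableOn ℂ ω (ball (0 : ℂ) 1))
    {z₀ : ℂ} (hz₀ : z₀ ∈ ball (0 : ℂ) 1) :
    HasDerivAt (fun z => segInt ω 0 z) (ω z₀) z₀ := by
  rw [mem_ball_zero_iff] at hz₀
  set ρ : ℝ := (1 + ‖z₀‖) / 2 with hρdef
  set ε : ℝ := (1 - ‖z₀‖) / 2 with hεdef
  have hε : 0 < ε := by simp only [hεdef]; linarith
  have hρ1 : ρ < 1 := by simp only [hρdef]; linarith
  have hballρ : ∀ x ∈ ball z₀ ε, ‖x‖ < ρ := by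
    intro x hx
    rw [mem_ball, dist_eq_norm] at hx
    calc ‖x‖ = ‖z₀ + (x - z₀)‖ := by ring_nf
    _ ≤ ‖z₀‖ + ‖x - z₀‖ := norm_add_le _ _
    _ < ‖z₀‖ + ε := by linarith
    _ = ρ := by simp only [hεdef, hρdef]; ring
  have hAn : AnalyticOnNhd ℂ ω (ball (0:ℂ) 1) := hω.analyticOnNhd isOpen_ball
  have hcontω : ContinuousOn ω (ball (0:ℂ) 1) := hω.continuousOn
  have hcontd : ContinuousOn (deriv ω) (ball (0:ℂ) 1) := hAn.deriv.continuousOn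
  obtain ⟨M, hM⟩ := (isCompact_closedBall (0:ℂ) ρ).exists_bound_of_continuousOn
    (hcontd.mono (closedBall_subset_ball hρ1))
  -- membership facts
  have hmemI : ∀ (t : ℝ), t ∈ Set.uIoc (0:ℝ) 1 → ∀ x : ℂ, ‖x‖ < 1 → (t:ℂ) * x ∈ ball (0:ℂ) 1 := by
    intro t ht x hx
    rw [Set.uIoc_of_le (by norm_num : (0:ℝ) ≤ 1)] at ht
    rw [mem_ball_zero_iff, norm_mul, Complex.norm_real]
    calc |t| * ‖x‖ ≤ 1 * ‖x‖ := by
          apply mul_le_mul_of_nonneg_right _ (norm_nonneg x)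
          rw [abs_le]; constructor <;> [linarith [ht.1]; exact ht.2]
      _ < 1 := by simpa using hx
  have hI : HasDerivAt (fun z => ∫ s in (0:ℝ)..1, ω ((s : ℂ) * z))
      (∫ s in (0:ℝ)..1, deriv ω ((s:ℂ) * z₀) * (s:ℂ)) z₀ := by
    have := intervalIntegral.hasDerivAt_integral_of_dominated_loc_of_deriv_le
      (F := fun x (t : ℝ) => ω ((t:ℂ) * x))
      (F' := fun x (t : ℝ) => deriv ω ((t:ℂ) * x) * (t:ℂ))
      (x₀ := z₀) (a := 0) (b := 1) (μ := MeasureTheory.volume)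
      (bound := fun _ => M) (Metric.ball_mem_nhds z₀ hε) ?meas ?int ?meas' ?bdd ?bint ?diff
    · exact this.2
    case meas =>
      filter_upwards [Metric.ball_mem_nhds z₀ hε] with x hx
      refine ContinuousOn.aestronglyMeasurable ?_ measurableSet_uIoc
      refine hcontω.comp (by fun_prop) fun t ht => ?_
      exact hmemI t ht x ((hballρ x hx).trans hρ1)
    case int =>
      apply ContinuousOn.intervalIntegrable
      refine hcontω.comp (by fun_prop) fun t ht => ?_
      rw [Set.uIcc_of_le (by norm_num : (0:ℝ) ≤ 1)] at ht
      rw [mem_ball_zero_iff, norm_mul, Complex.norm_real]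
      calc |t| * ‖z₀‖ ≤ 1 * ‖z₀‖ := by
            apply mul_le_mul_of_nonneg_right _ (norm_nonneg _)
            rw [abs_le]; exact ⟨by linarith [ht.1], ht.2⟩
        _ < 1 := by simpa using hz₀
    case meas' =>
      refine ContinuousOn.aestronglyMeasurable ?_ measurableSet_uIoc
      refine ContinuousOn.mul (hcontd.comp (by fun_prop) fun t ht => ?_) (by fun_prop)
      exact hmemI t ht z₀ hz₀
    case bdd =>
      refine Filter.Eventually.of_forall fun t => fun ht x hx => ?_
      rw [norm_mul, Complex.norm_real]
      have htx : (t:ℂ) * x ∈ closedBall (0:ℂ) ρ := by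
        rw [mem_closedBall_zero_iff, norm_mul, Complex.norm_real]
        rw [Set.uIoc_of_le (by norm_num : (0:ℝ) ≤ 1)] at ht
        calc |t| * ‖x‖ ≤ 1 * ‖x‖ := by
              apply mul_le_mul_of_nonneg_right _ (norm_nonneg _)
              rw [abs_le]; exact ⟨by linarith [ht.1], ht.2⟩
          _ ≤ ρ := by simpa using (hballρ x hx).le
      have h1 : ‖deriv ω ((t:ℂ) * x)‖ ≤ M := hM _ htx
      have h2 : |t| ≤ 1 := by
        rw [Set.uIoc_of_le (by norm_num : (0:ℝ) ≤ 1)] at ht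
        rw [abs_le]; exact ⟨by linarith [ht.1], ht.2⟩
      calc ‖deriv ω ((t:ℂ)*x)‖ * |t| ≤ M * 1 :=
            mul_le_mul h1 h2 (abs_nonneg t) ((norm_nonneg _).trans h1)
        _ = M := mul_one M
    case bint => exact intervalIntegrable_const
    case diff =>
      refine Filter.Eventually.of_forall fun t => fun ht x hx => ?_
      have hmem : (t:ℂ) * x ∈ ball (0:ℂ) 1 := hmemI t ht x ((hballρ x hx).trans hρ1)
      have hd : HasDerivAt ω (deriv ω ((t:ℂ)*x)) ((t:ℂ)*x) :=
        (hω.differentiableAt (isOpen_ball.mem_nhds hmem)).hasDerivAt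
      have hin : HasDerivAt (fun y : ℂ => (t:ℂ) * y) (t:ℂ) x := by
        simpa using (hasDerivAt_id x).const_mul (t:ℂ)
      exact hd.comp x hin
  have hS : HasDerivAt (fun z => z * ∫ s in (0:ℝ)..1, ω ((s : ℂ) * z))
      ((∫ s in (0:ℝ)..1, ω ((s:ℂ) * z₀)) + z₀ * ∫ s in (0:ℝ)..1, deriv ω ((s:ℂ) * z₀) * (s:ℂ))
      z₀ := by
    simpa using (hasDerivAt_id z₀).fun_mul hI
  have key : (∫ s in (0:ℝ)..1, ω ((s:ℂ) * z₀))
      + z₀ * (∫ s in (0:ℝ)..1, deriv ω ((s:ℂ) * z₀) * (s:ℂ)) = ω z₀ := by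
    have hmem : ∀ t : ℝ, t ∈ Set.uIcc (0:ℝ) 1 → (t:ℂ) * z₀ ∈ ball (0:ℂ) 1 := by
      intro t ht
      rw [Set.uIcc_of_le (by norm_num : (0:ℝ) ≤ 1)] at ht
      rw [mem_ball_zero_iff, norm_mul, Complex.norm_real]
      calc |t| * ‖z₀‖ ≤ 1 * ‖z₀‖ := by
            apply mul_le_mul_of_nonneg_right _ (norm_nonneg _)
            rw [abs_le]; exact ⟨by linarith [ht.1], ht.2⟩
        _ < 1 := by simpa using hz₀
    have hγ : ∀ t ∈ Set.uIcc (0:ℝ) 1,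
        HasDerivAt (fun s : ℝ => (s:ℂ) * ω ((s:ℂ) * z₀))
          (ω ((t:ℂ) * z₀) + (t:ℂ) * (z₀ • deriv ω ((t:ℂ) * z₀))) t := by
      intro t ht
      have h1 : HasDerivAt (fun s : ℝ => (s:ℂ)) 1 t := by
        simpa using (hasDerivAt_id t).ofReal_comp
      have hd : HasDerivAt ω (deriv ω ((t:ℂ)*z₀)) ((t:ℂ)*z₀) :=
        (hω.differentiableAt (isOpen_ball.mem_nhds (hmem t ht))).hasDerivAt
      have hin : HasDerivAt (fun s : ℝ => (s:ℂ) * z₀) z₀ t := by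
        simpa using h1.mul_const z₀
      have h2 : HasDerivAt (fun s : ℝ => ω ((s:ℂ) * z₀)) (z₀ • deriv ω ((t:ℂ)*z₀)) t :=
        hd.scomp t hin
      simpa using h1.fun_mul h2
    have hint : IntervalIntegrable
        (fun t : ℝ => ω ((t:ℂ) * z₀) + (t:ℂ) * (z₀ • deriv ω ((t:ℂ) * z₀)))
        MeasureTheory.volume 0 1 := by
      apply ContinuousOn.intervalIntegrable
      refine ContinuousOn.add (hcontω.comp (by fun_prop) hmem) ?_
      exact ContinuousOn.mul (by fun_prop)
        (ContinuousOn.fun_smul continuousOn_const (hcontd.comp (by fun_prop) hmem))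
    have hFTC := intervalIntegral.integral_eq_sub_of_hasDerivAt hγ hint
    have hint1 : IntervalIntegrable (fun t : ℝ => ω ((t:ℂ) * z₀)) MeasureTheory.volume 0 1 :=
      ContinuousOn.intervalIntegrable (hcontω.comp (by fun_prop) hmem)
    have hint2 : IntervalIntegrable (fun t : ℝ => (t:ℂ) * (z₀ • deriv ω ((t:ℂ) * z₀)))
        MeasureTheory.volume 0 1 := by
      apply ContinuousOn.intervalIntegrable
      exact ContinuousOn.mul (by fun_prop)
        (ContinuousOn.fun_smul continuousOn_const (hcontd.comp (by fun_prop) hmem))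
    rw [intervalIntegral.integral_add hint1 hint2] at hFTC
    have heq2 : (∫ t in (0:ℝ)..1, (t:ℂ) * (z₀ • deriv ω ((t:ℂ) * z₀)))
        = z₀ * ∫ t in (0:ℝ)..1, deriv ω ((t:ℂ) * z₀) * (t:ℂ) := by
      rw [← intervalIntegral.integral_const_mul]
      congr 1; funext t; simp [smul_eq_mul]; ring
    rw [heq2] at hFTC
    simpa using hFTC
  have : HasDerivAt (fun z => z * ∫ s in (0:ℝ)..1, ω ((s : ℂ) * z)) (ω z₀) z₀ := key ▸ hS
  refine HasDerivAt.congr_of_eventuallyEq this ?_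
  filter_upwards with z
  rw [segInt_zero_eq]

lemma norm_segInt_le {ω : ℂ → ℂ} (hbd : ∀ z ∈ ball (0 : ℂ) 1, ‖ω z‖ ≤ 1)
    {z : ℂ} (hz : z ∈ ball (0 : ℂ) 1) : ‖segInt ω 0 z‖ ≤ ‖z‖ := by
  rw [mem_ball_zero_iff] at hz
  rw [segInt_zero_eq, norm_mul]
  have : ‖∫ s in (0:ℝ)..1, ω ((s:ℂ) * z)‖ ≤ 1 * |1 - 0| := by
    apply intervalIntegral.norm_integral_le_of_norm_le_const
    intro t ht
    rw [Set.uIoc_of_le (by norm_num : (0:ℝ) ≤ 1)] at ht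
    apply hbd
    rw [mem_ball_zero_iff, norm_mul, Complex.norm_real]
    calc |t| * ‖z‖ ≤ 1 * ‖z‖ := by
          apply mul_le_mul_of_nonneg_right _ (norm_nonneg _)
          rw [abs_le]; exact ⟨by linarith [ht.1], ht.2⟩
      _ < 1 := by simpa using hz
  calc ‖z‖ * ‖∫ s in (0:ℝ)..1, ω ((s:ℂ) * z)‖ ≤ ‖z‖ * 1 := by
        apply mul_le_mul_of_nonneg_left _ (norm_nonneg z)
        simpa using this
    _ = ‖z‖ := mul_one _

/-- The fixed-point argument of Theorem 3: if `|c| > (1 + λ p²)/p` then, with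
`r = (1 + λ p²)/(p |c|) ∈ (0,1)`, the function
`A(z) = 1 + c z - λ z ∫₀ᶻ ω(t) dt` has a zero `z₀` with `|z₀| ≤ p r`. -/
theorem stmt_12 (lam p : ℝ) (hlam : lam ∈ Set.Ioc (0 : ℝ) 1)
    (hp : p ∈ Set.Ioc (0 : ℝ) 1)
    (ω : ℂ → ℂ) (c : ℂ)
    (hω : DifferentiableOn ℂ ω (ball (0 : ℂ) 1))
    (hbd : ∀ z ∈ ball (0 : ℂ) 1, ‖ω z‖ ≤ 1)
    (hc : (1 + lam * p ^ 2) / p < ‖c‖)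
    (A : ℂ → ℂ)
    (hA : ∀ z ∈ ball (0 : ℂ) 1, A z = 1 + c * z - (lam : ℂ) * z * segInt ω 0 z) :
    (1 + lam * p ^ 2) / (p * ‖c‖) ∈ Set.Ioo (0 : ℝ) 1 ∧
      ∃ z₀ : ℂ, ‖z₀‖ ≤ p * ((1 + lam * p ^ 2) / (p * ‖c‖)) ∧ A z₀ = 0 := by
  obtain ⟨hlam0, hlam1⟩ := hlam
  obtain ⟨hp0, hp1⟩ := hp
  have hN0 : 0 < 1 + lam * p ^ 2 := by positivity
  have hc0 : 0 < ‖c‖ := lt_trans (div_pos hN0 hp0) hc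
  have hcne : c ≠ 0 := by simpa using hc0.ne'
  have hNpc : 1 + lam * p ^ 2 < ‖c‖ * p := (div_lt_iff₀ hp0).mp hc
  set ρ : ℝ := (1 + lam * p ^ 2) / ‖c‖ with hρdef
  have hρ0 : 0 < ρ := div_pos hN0 hc0
  have hρp : ρ < p := by rw [hρdef, div_lt_iff₀ hc0]; linarith
  have hρ1 : ρ < 1 := hρp.trans_le hp1
  have hpr : p * ((1 + lam * p ^ 2) / (p * ‖c‖)) = ρ := by
    rw [hρdef]; rw [mul_div_assoc', mul_div_mul_left _ _ hp0.ne']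
  have hsub : closedBall (0:ℂ) ρ ⊆ ball (0:ℂ) 1 := closedBall_subset_ball hρ1
  -- the fixed-point map
  set F : ℂ → ℂ := fun z => ((lam : ℂ) * z * segInt ω 0 z - 1) / c with hFdef
  have hmaps : Set.MapsTo F (closedBall (0:ℂ) ρ) (closedBall (0:ℂ) ρ) := by
    intro z hz
    have hz1 : z ∈ ball (0:ℂ) 1 := hsub hz
    rw [mem_closedBall_zero_iff] at hz ⊢
    have hS : ‖segInt ω 0 z‖ ≤ ‖z‖ := norm_segInt_le hbd hz1
    have h1 : ‖(lam : ℂ) * z * segInt ω 0 z - 1‖ ≤ lam * (‖z‖ * ‖segInt ω 0 z‖) + 1 := by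
      calc ‖(lam : ℂ) * z * segInt ω 0 z - 1‖
          ≤ ‖(lam : ℂ) * z * segInt ω 0 z‖ + ‖(1:ℂ)‖ := norm_sub_le _ _
        _ = lam * (‖z‖ * ‖segInt ω 0 z‖) + 1 := by
            rw [norm_mul, norm_mul, Complex.norm_real, Real.norm_eq_abs,
              abs_of_pos hlam0, norm_one, mul_assoc]
    have h2 : lam * (‖z‖ * ‖segInt ω 0 z‖) + 1 ≤ 1 + lam * p ^ 2 := by
      have : ‖z‖ * ‖segInt ω 0 z‖ ≤ p ^ 2 := by
        calc ‖z‖ * ‖segInt ω 0 z‖ ≤ ‖z‖ * ‖z‖ :=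
              mul_le_mul_of_nonneg_left hS (norm_nonneg z)
          _ ≤ p * p := by
              apply mul_le_mul (hz.trans hρp.le) (hz.trans hρp.le) (norm_nonneg z) hp0.le
          _ = p ^ 2 := by ring
      nlinarith
    rw [hFdef]
    simp only [norm_div]
    rw [div_le_iff₀ hc0, hρdef, div_mul_cancel₀ _ hc0.ne']
    linarith
  set K : NNReal := Real.toNNReal (2 * lam * ρ / ‖c‖) with hKdef
  have hKval : (K : ℝ) = 2 * lam * ρ / ‖c‖ := by
    rw [hKdef, Real.coe_toNNReal]; positivity
  have hK1 : (K : ℝ) < 1 := by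
    have hp2 : p ^ 2 ≤ 1 := by nlinarith
    have hl : lam * p ^ 2 ≤ 1 := by nlinarith
    have hsq : (1 + lam * p ^ 2) ^ 2 < (‖c‖ * p) ^ 2 := by nlinarith
    have hkey : 2 * lam * (1 + lam * p ^ 2) < ‖c‖ * ‖c‖ := by
      nlinarith [hsq, hl, hN0, mul_pos hp0 hp0, mul_pos hlam0 hN0]
    rw [hKval, hρdef, ← mul_div_assoc, div_div, div_lt_one (by positivity)]
    exact hkey
  have hlipS : ∀ x ∈ closedBall (0:ℂ) ρ, ∀ y ∈ closedBall (0:ℂ) ρ,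
      ‖segInt ω 0 x - segInt ω 0 y‖ ≤ ‖x - y‖ := by
    intro x hx y hy
    have := Convex.norm_image_sub_le_of_norm_hasDerivWithin_le
      (f := fun z => segInt ω 0 z) (f' := ω) (s := closedBall (0:ℂ) ρ) (C := 1)
      (fun z hz => (hasDerivAt_segInt hω (hsub hz)).hasDerivWithinAt)
      (fun z hz => hbd z (hsub hz)) (convex_closedBall _ _) hy hx
    simpa using this
  have hlip : LipschitzOnWith K F (closedBall (0:ℂ) ρ) := by
    rw [lipschitzOnWith_iff_dist_le_mul]
    intro x hx y hy
    rw [dist_eq_norm, dist_eq_norm, hKval]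
    have hx' : ‖x‖ ≤ ρ := mem_closedBall_zero_iff.mp hx
    have hy' : ‖y‖ ≤ ρ := mem_closedBall_zero_iff.mp hy
    have hSx : ‖segInt ω 0 x‖ ≤ ‖x‖ := norm_segInt_le hbd (hsub hx)
    have hFxy : F x - F y = ((lam:ℂ) * ((x - y) * segInt ω 0 x
        + y * (segInt ω 0 x - segInt ω 0 y))) / c := by
      rw [hFdef]; field_simp; ring
    rw [hFxy, norm_div, div_le_iff₀ hc0]
    have hb : ‖(lam:ℂ) * ((x - y) * segInt ω 0 x + y * (segInt ω 0 x - segInt ω 0 y))‖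
        ≤ lam * (‖x - y‖ * ρ + ρ * ‖x - y‖) := by
      rw [norm_mul, Complex.norm_real, Real.norm_eq_abs, abs_of_pos hlam0]
      apply mul_le_mul_of_nonneg_left _ hlam0.le
      calc ‖(x - y) * segInt ω 0 x + y * (segInt ω 0 x - segInt ω 0 y)‖
          ≤ ‖(x - y) * segInt ω 0 x‖ + ‖y * (segInt ω 0 x - segInt ω 0 y)‖ := norm_add_le _ _
        _ ≤ ‖x - y‖ * ρ + ρ * ‖x - y‖ := by
            rw [norm_mul, norm_mul]
            apply add_le_add
            · exact mul_le_mul_of_nonneg_left (hSx.trans hx') (norm_nonneg _)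
            · exact mul_le_mul hy' (hlipS x hx y hy) (norm_nonneg _) hρ0.le
    have heq : 2 * lam * ρ / ‖c‖ * ‖x - y‖ * ‖c‖ = lam * (‖x - y‖ * ρ + ρ * ‖x - y‖) := by
      rw [div_mul_eq_mul_div, div_mul_cancel₀ _ hc0.ne']; ring
    rw [heq]; exact hb
  have hcontr : ContractingWith K (hmaps.restrict F _ _) :=
    ⟨by exact_mod_cast hK1, hlip.mapsToRestrict hmaps⟩
  have h0mem : (0:ℂ) ∈ closedBall (0:ℂ) ρ := by
    rw [mem_closedBall_zero_iff]; simpa using hρ0.le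
  obtain ⟨y, hy, hfix, -⟩ := hcontr.exists_fixedPoint'
    (isClosed_closedBall.isComplete) hmaps h0mem (edist_ne_top _ _)
  refine ⟨⟨by positivity, ?_⟩, y, ?_, ?_⟩
  · rw [div_lt_one (by positivity)]; linarith
  · rw [hpr]; exact mem_closedBall_zero_iff.mp hy
  · have hy1 : y ∈ ball (0:ℂ) 1 := hsub hy
    have hFy : F y = y := hfix
    rw [hFdef] at hFy
    have : (lam:ℂ) * y * segInt ω 0 y - 1 = c * y := by
      field_simp at hFy
      linear_combination hFy
    rw [hA y hy1]
    linear_combination -this
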